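/- If a unilateral weighted shift S with positive bounded weights possesses Bishop's property (β), then r₁(S) = r(S), where r₁(S) = lim [m(Sⁿ)]^{1/n} with m the lower bound, and r(S) the spectral radius. -/

import Mathlib

open Filter

section Defs

variable {X : Type*} [NormedAddCommGroup X] [NormedSpace ℂ X]

/-- `T` possesses Bishop's property (β). -/
def HasBishopBeta (T : X →L[ℂ] X) : Prop :=
  ∀ U : Set ℂ, IsOpen U →
    ∀ f : ℕ → ℂ → X, (∀ n, AnalyticOnNhd ℂ (f n) U) →
      (∀ K : Set ℂ, K ⊆ U → IsCompact K →
        TendstoUniformlyOn (fun n z => (T - z • (1 : X →L[ℂ] X)) (f n z)) 0 atTop K) →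
      ∀ K : Set ℂ, K ⊆ U → IsCompact K →
        TendstoUniformlyOn (fun n z => f n z) 0 atTop K

/-- The lower bound `m(T) = inf {‖T x‖ : ‖x‖ = 1}` of an operator `T`. -/
noncomputable def lowerBound (T : X →L[ℂ] X) : ℝ :=
  sInf ((fun x => ‖T x‖) '' Metric.sphere (0 : X) 1)

end Defs

open scoped ENNReal NNReal

namespace BishopAux

/-- The product `β_n = ω_0 ⋯ ω_{n-1}` of the first `n` weights. -/
noncomputable def bb (ω : ℕ → ℝ) (n : ℕ) : ℝ := ∏ i ∈ Finset.range n, ω i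

lemma bb_pos {ω : ℕ → ℝ} (hpos : ∀ n, 0 < ω n) (n : ℕ) : 0 < bb ω n :=
  Finset.prod_pos fun i _ => hpos i

lemma bb_succ (ω : ℕ → ℝ) (n : ℕ) : bb ω (n + 1) = bb ω n * ω n :=
  Finset.prod_range_succ _ _

variable {H : Type*} [NormedAddCommGroup H] [InnerProductSpace ℂ H] [CompleteSpace H]

/-- Norm-squared of a finite orthonormal combination. -/
lemma norm_sum_sq (v : ℕ → H) (hv : Orthonormal ℂ v) (s : Finset ℕ) (l : ℕ → ℂ) :
    ‖∑ i ∈ s, l i • v i‖ ^ 2 = ∑ i ∈ s, ‖l i‖ ^ 2 := by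
  have h := inner_self_eq_norm_sq_to_K (𝕜 := ℂ) (∑ i ∈ s, l i • v i)
  rw [hv.inner_sum l l s] at h
  have h3 : ∑ i ∈ s, (starRingEnd ℂ) (l i) * l i = ((∑ i ∈ s, ‖l i‖ ^ 2 : ℝ) : ℂ) := by
    push_cast
    exact Finset.sum_congr rfl fun i _ => RCLike.conj_mul (l i)
  rw [h3] at h
  rw [← RCLike.ofReal_pow] at h
  exact (RCLike.ofReal_injective (K := ℂ) h).symm

variable (S : H →L[ℂ] H) (e : HilbertBasis ℕ ℂ H) (ω : ℕ → ℝ)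

lemma pow_apply (hpos : ∀ n, 0 < ω n) (hS : ∀ n, S (e n) = (ω n : ℂ) • e (n + 1)) :
    ∀ n k, (S ^ n) (e k) = ((bb ω (k + n) / bb ω k : ℝ) : ℂ) • e (k + n) := by
  intro n
  induction n with
  | zero =>
    intro k
    simp [div_self (bb_pos hpos k).ne']
  | succ n ih =>
    intro k
    have h1 : (S ^ (n + 1)) (e k) = (S ^ n) (S (e k)) := by
      rw [pow_succ, ContinuousLinearMap.mul_apply]
    rw [h1, hS k, map_smul, ih (k + 1), smul_smul]
    have hidx : k + 1 + n = k + (n + 1) := by omega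
    rw [hidx]
    congr 1
    rw [← Complex.ofReal_mul]
    congr 1
    have h2 : bb ω (k + 1) = bb ω k * ω k := bb_succ ω k
    field_simp [h2, (hpos k).ne', (bb_pos hpos k).ne', (bb_pos hpos (k + 1)).ne']
    rw [h2]; ring

/-- Every `x` satisfies a closed predicate holding on finite combinations of basis vectors. -/
lemma dense_span_argument (P : H → Prop) (hP : IsClosed {x | P x})
    (hspan : ∀ l : ℕ →₀ ℂ, P (∑ k ∈ l.support, l k • e k)) : ∀ x, P x := by
  have hd : Dense (↑(Submodule.span ℂ (Set.range ⇑e)) : Set H) := by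
    rw [Submodule.dense_iff_topologicalClosure_eq_top]
    exact e.dense_span
  intro x
  have hx : x ∈ closure (↑(Submodule.span ℂ (Set.range ⇑e)) : Set H) := hd x
  have hsub : (↑(Submodule.span ℂ (Set.range ⇑e)) : Set H) ⊆ {x | P x} := by
    intro y hy
    obtain ⟨l, rfl⟩ := Finsupp.mem_span_range_iff_exists_finsupp.mp hy
    exact hspan l
  exact closure_minimal hsub hP hx

lemma norm_pow_apply_sq (hpos : ∀ n, 0 < ω n) (hS : ∀ n, S (e n) = (ω n : ℂ) • e (n + 1))
    (n : ℕ) (l : ℕ →₀ ℂ) :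
    ‖(S ^ n) (∑ k ∈ l.support, l k • e k)‖ ^ 2
      = ∑ k ∈ l.support, ‖l k‖ ^ 2 * (bb ω (k + n) / bb ω k) ^ 2 := by
  have hinj : Function.Injective fun k : ℕ => k + n := fun a b h => Nat.add_right_cancel h
  have hv : Orthonormal ℂ fun k : ℕ => e (k + n) := e.orthonormal.comp _ hinj
  have h1 : (S ^ n) (∑ k ∈ l.support, l k • e k)
      = ∑ k ∈ l.support, (l k * ((bb ω (k + n) / bb ω k : ℝ) : ℂ)) • e (k + n) := by
    rw [map_sum]
    refine Finset.sum_congr rfl fun k _ => ?_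
    rw [map_smul, pow_apply S e ω hpos hS n k, smul_smul]
  rw [h1, norm_sum_sq _ hv]
  refine Finset.sum_congr rfl fun k _ => ?_
  rw [norm_mul, Complex.norm_real, mul_pow, Real.norm_eq_abs, sq_abs]

lemma norm_base_sq (l : ℕ →₀ ℂ) :
    ‖∑ k ∈ l.support, l k • e k‖ ^ 2 = ∑ k ∈ l.support, ‖l k‖ ^ 2 :=
  norm_sum_sq _ e.orthonormal _ _

lemma apply_le (hpos : ∀ n, 0 < ω n) (hS : ∀ n, S (e n) = (ω n : ℂ) • e (n + 1))
    {n : ℕ} {B : ℝ} (hB : 0 ≤ B) (h : ∀ k, bb ω (k + n) ≤ B * bb ω k) (x : H) :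
    ‖(S ^ n) x‖ ≤ B * ‖x‖ := by
  refine dense_span_argument e (fun x => ‖(S ^ n) x‖ ≤ B * ‖x‖)
    (isClosed_le ((S ^ n).continuous.norm) (continuous_const.mul continuous_norm)) ?_ x
  intro l
  have key : ‖(S ^ n) (∑ k ∈ l.support, l k • e k)‖ ^ 2 ≤ (B * ‖∑ k ∈ l.support, l k • e k‖) ^ 2 := by
    rw [norm_pow_apply_sq S e ω hpos hS n l, mul_pow, norm_base_sq e l, Finset.mul_sum]
    refine Finset.sum_le_sum fun k _ => ?_
    rw [mul_comm (B ^ 2) _]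
    refine mul_le_mul_of_nonneg_left ?_ (by positivity)
    have hr : bb ω (k + n) / bb ω k ≤ B := by
      rw [div_le_iff₀ (bb_pos hpos k)]; exact h k
    have hr0 : 0 ≤ bb ω (k + n) / bb ω k := le_of_lt (div_pos (bb_pos hpos _) (bb_pos hpos _))
    exact pow_le_pow_left₀ hr0 hr 2
  have hb2 : 0 ≤ B * ‖∑ k ∈ l.support, l k • e k‖ := by positivity
  exact le_of_pow_le_pow_left₀ two_ne_zero hb2 key

lemma le_apply (hpos : ∀ n, 0 < ω n) (hS : ∀ n, S (e n) = (ω n : ℂ) • e (n + 1))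
    {n : ℕ} {c : ℝ} (hc : 0 ≤ c) (h : ∀ k, c * bb ω k ≤ bb ω (k + n)) (x : H) :
    c * ‖x‖ ≤ ‖(S ^ n) x‖ := by
  refine dense_span_argument e (fun x => c * ‖x‖ ≤ ‖(S ^ n) x‖)
    (isClosed_le (continuous_const.mul continuous_norm) ((S ^ n).continuous.norm)) ?_ x
  intro l
  have key : (c * ‖∑ k ∈ l.support, l k • e k‖) ^ 2 ≤ ‖(S ^ n) (∑ k ∈ l.support, l k • e k)‖ ^ 2 := by
    rw [norm_pow_apply_sq S e ω hpos hS n l, mul_pow, norm_base_sq e l, Finset.mul_sum]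
    refine Finset.sum_le_sum fun k _ => ?_
    rw [mul_comm (c ^ 2) _]
    refine mul_le_mul_of_nonneg_left ?_ (by positivity)
    have hr : c ≤ bb ω (k + n) / bb ω k := by
      rw [le_div_iff₀ (bb_pos hpos k)]; exact h k
    exact pow_le_pow_left₀ hc hr 2
  have hb2 : 0 ≤ ‖(S ^ n) (∑ k ∈ l.support, l k • e k)‖ := norm_nonneg _
  exact le_of_pow_le_pow_left₀ two_ne_zero hb2 key

/-- The key consequence of Bishop's property (β) for a weighted shift: a uniform dichotomy
on the weight products over the annulus `τ₁ < |z| < τ₂`. -/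
lemma dichotomy (hpos : ∀ n, 0 < ω n) (hS : ∀ n, S (e n) = (ω n : ℂ) • e (n + 1))
    (hβ : HasBishopBeta S) (τ₁ τ₂ : ℝ) (hτ1 : 0 < τ₁) (hτ12 : τ₁ < τ₂) :
    ∃ ε : ℝ, 0 < ε ∧ ε ≤ 1 ∧ ∀ p α γ : ℕ, 1 ≤ γ →
      ε * bb ω (p + α) ≤ τ₂ ^ α * bb ω p ∨ ε * (τ₁ ^ γ * bb ω (p + α)) ≤ bb ω (p + α + γ) := by
  by_contra hcon
  push_neg at hcon
  have hsel : ∀ ν : ℕ, ∃ p α γ : ℕ, 1 ≤ γ ∧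
      τ₂ ^ α * bb ω p < (1 / (ν + 1 : ℝ)) * bb ω (p + α) ∧
      bb ω (p + α + γ) < (1 / (ν + 1 : ℝ)) * (τ₁ ^ γ * bb ω (p + α)) := by
    intro ν
    obtain ⟨p, α, γ, hγ, h1, h2⟩ := hcon (1 / (ν + 1 : ℝ)) (by positivity)
      (by rw [div_le_one (by positivity)]; exact le_add_of_nonneg_left (Nat.cast_nonneg ν))
    exact ⟨p, α, γ, hγ, h1, h2⟩
  choose p α γ hγ hA hB using hsel
  set U : Set ℂ := Metric.ball 0 τ₂ \ Metric.closedBall 0 τ₁ with hUdef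
  have hUopen : IsOpen U := Metric.isOpen_ball.sdiff Metric.isClosed_closedBall
  have hmemU : ∀ z : ℂ, z ∈ U ↔ τ₁ < ‖z‖ ∧ ‖z‖ < τ₂ := by
    intro z
    simp only [hUdef, Set.mem_diff, Metric.mem_ball, Metric.mem_closedBall, dist_zero_right,
      not_le]
    tauto
  set F : ℕ → ℂ → H := fun ν z => ∑ i ∈ Finset.range (α ν + γ ν),
      (((bb ω (p ν + i) / bb ω (p ν + α ν) : ℝ) : ℂ) * z ^ ((α ν : ℤ) - (i : ℤ))) • e (p ν + i)
    with hFdef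
  have hz0 : ∀ z ∈ U, z ≠ 0 := by
    intro z hz h0
    rw [hmemU] at hz
    rw [h0, norm_zero] at hz
    exact absurd hz.1 (not_lt.mpr hτ1.le)
  have hanalytic : ∀ ν, AnalyticOnNhd ℂ (F ν) U := by
    intro ν
    refine DifferentiableOn.analyticOnNhd ?_ hUopen
    intro z hz
    refine DifferentiableAt.differentiableWithinAt ?_
    refine DifferentiableAt.fun_sum fun i _ => ?_
    exact ((differentiableAt_const _).mul
      (differentiableAt_zpow.mpr (Or.inl (hz0 z hz)))).smul (differentiableAt_const _)
  -- the key algebraic identity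
  have hkey : ∀ ν, ∀ z : ℂ, z ≠ 0 →
      (S - z • (1 : H →L[ℂ] H)) (F ν z) =
        (((bb ω (p ν + (α ν + γ ν)) / bb ω (p ν + α ν) : ℝ) : ℂ)
            * z ^ ((α ν : ℤ) - ((α ν + γ ν : ℕ) : ℤ) + 1)) • e (p ν + (α ν + γ ν))
          - (((bb ω (p ν + 0) / bb ω (p ν + α ν) : ℝ) : ℂ)
            * z ^ ((α ν : ℤ) - ((0 : ℕ) : ℤ) + 1)) • e (p ν + 0) := by
    intro ν z hz
    set G : ℕ → H := fun i =>
      (((bb ω (p ν + i) / bb ω (p ν + α ν) : ℝ) : ℂ) * z ^ ((α ν : ℤ) - (i : ℤ) + 1)) • e (p ν + i)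
      with hGdef
    have hSF : S (F ν z) = ∑ i ∈ Finset.range (α ν + γ ν), G (i + 1) := by
      rw [hFdef]
      rw [map_sum]
      refine Finset.sum_congr rfl fun i _ => ?_
      rw [map_smul, hS (p ν + i), smul_smul, hGdef]
      have hidx : p ν + i + 1 = p ν + (i + 1) := by omega
      rw [hidx]
      congr 1
      have hexp : (α ν : ℤ) - ((i + 1 : ℕ) : ℤ) + 1 = (α ν : ℤ) - (i : ℤ) := by push_cast; ring
      rw [hexp]
      have hbb : (bb ω (p ν + i) / bb ω (p ν + α ν) : ℝ) * ω (p ν + i)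
          = bb ω (p ν + (i + 1)) / bb ω (p ν + α ν) := by
        have : p ν + (i + 1) = (p ν + i) + 1 := by omega
        rw [this, bb_succ]
        field_simp
      rw [mul_comm (((bb ω (p ν + i) / bb ω (p ν + α ν) : ℝ) : ℂ) * _) ((ω (p ν + i) : ℝ) : ℂ)]
      rw [← mul_assoc, ← Complex.ofReal_mul, mul_comm ((ω (p ν + i) : ℝ)) _, hbb]
    have hzF : z • F ν z = ∑ i ∈ Finset.range (α ν + γ ν), G i := by
      rw [hFdef, Finset.smul_sum]
      refine Finset.sum_congr rfl fun i _ => ?_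
      rw [smul_smul, hGdef]
      congr 1
      rw [zpow_add_one₀ hz]
      ring
    have hsub : (S - z • (1 : H →L[ℂ] H)) (F ν z) = S (F ν z) - z • F ν z := by
      rw [ContinuousLinearMap.sub_apply, ContinuousLinearMap.smul_apply,
        ContinuousLinearMap.one_apply]
    rw [hsub, hSF, hzF]
    have t1 : ∑ i ∈ Finset.range (α ν + γ ν), G (i + 1)
        = ∑ i ∈ Finset.range (α ν + γ ν + 1), G i - G 0 := by
      rw [Finset.sum_range_succ' G (α ν + γ ν)]; abel
    have t2 : ∑ i ∈ Finset.range (α ν + γ ν), G i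
        = ∑ i ∈ Finset.range (α ν + γ ν + 1), G i - G (α ν + γ ν) := by
      rw [Finset.sum_range_succ G (α ν + γ ν)]; abel
    rw [t1, t2, hGdef]
    abel
  -- the uniform convergence hypothesis of property (β)
  have hhyp : ∀ K : Set ℂ, K ⊆ U → IsCompact K →
      TendstoUniformlyOn (fun ν z => (S - z • (1 : H →L[ℂ] H)) (F ν z)) 0 atTop K := by
    intro K hKU _
    rw [Metric.tendstoUniformlyOn_iff]
    intro δ hδ
    have hten : Tendsto (fun ν : ℕ => 2 * τ₂ * (1 / (ν + 1 : ℝ))) atTop (nhds 0) := by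
      have h0 := tendsto_one_div_add_atTop_nhds_zero_nat (𝕜 := ℝ)
      have := h0.const_mul (2 * τ₂)
      simpa using this
    filter_upwards [hten.eventually_lt_const hδ] with ν hν z hzK
    have hzU := hKU hzK
    have hzmem := (hmemU z).mp hzU
    have hznorm1 : τ₁ < ‖z‖ := hzmem.1
    have hznorm2 : ‖z‖ < τ₂ := hzmem.2
    have hzpos : (0 : ℝ) < ‖z‖ := lt_trans hτ1 hznorm1
    rw [hkey ν z (hz0 z hzU)]
    simp only [Pi.zero_apply, dist_zero_left]
    have hν1 : (0 : ℝ) < 1 / (ν + 1 : ℝ) := by positivity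
    -- bound the two boundary terms
    have hterm1 : ‖(((bb ω (p ν + (α ν + γ ν)) / bb ω (p ν + α ν) : ℝ) : ℂ)
        * z ^ ((α ν : ℤ) - ((α ν + γ ν : ℕ) : ℤ) + 1)) • e (p ν + (α ν + γ ν))‖
        ≤ τ₂ * (1 / (ν + 1 : ℝ)) := by
      rw [norm_smul, e.orthonormal.1 _, mul_one, norm_mul, Complex.norm_real, norm_zpow]
      have hexp : (α ν : ℤ) - ((α ν + γ ν : ℕ) : ℤ) + 1 = 1 - (γ ν : ℤ) := by push_cast; ring
      rw [hexp, zpow_sub₀ (ne_of_gt hzpos), zpow_one, zpow_natCast]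
      have hratio : |bb ω (p ν + (α ν + γ ν)) / bb ω (p ν + α ν)|
          = bb ω (p ν + (α ν + γ ν)) / bb ω (p ν + α ν) :=
        abs_of_pos (div_pos (bb_pos hpos _) (bb_pos hpos _))
      rw [Real.norm_eq_abs, hratio]
      have hidx : p ν + (α ν + γ ν) = p ν + α ν + γ ν := by omega
      have hrlt : bb ω (p ν + (α ν + γ ν)) / bb ω (p ν + α ν)
          < (1 / (ν + 1 : ℝ)) * τ₁ ^ (γ ν) := by
        rw [hidx, div_lt_iff₀ (bb_pos hpos _)]
        calc bb ω (p ν + α ν + γ ν) < (1 / (ν + 1 : ℝ)) * (τ₁ ^ γ ν * bb ω (p ν + α ν)) := hB ν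
          _ = (1 / (ν + 1 : ℝ)) * τ₁ ^ γ ν * bb ω (p ν + α ν) := by ring
      have hzdiv : ‖z‖ / ‖z‖ ^ (γ ν) ≤ τ₂ / τ₁ ^ (γ ν) :=
        div_le_div₀ (by linarith) (le_of_lt hznorm2) (pow_pos hτ1 _)
          (pow_le_pow_left₀ hτ1.le hznorm1.le _)
      calc bb ω (p ν + (α ν + γ ν)) / bb ω (p ν + α ν) * (‖z‖ / ‖z‖ ^ γ ν)
          ≤ ((1 / (ν + 1 : ℝ)) * τ₁ ^ (γ ν)) * (τ₂ / τ₁ ^ (γ ν)) := by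
            refine mul_le_mul (le_of_lt hrlt) hzdiv ?_ ?_
            · positivity
            · positivity
        _ = τ₂ * (1 / (ν + 1 : ℝ)) := by
            field_simp
    have hterm2 : ‖(((bb ω (p ν + 0) / bb ω (p ν + α ν) : ℝ) : ℂ)
        * z ^ ((α ν : ℤ) - ((0 : ℕ) : ℤ) + 1)) • e (p ν + 0)‖
        ≤ τ₂ * (1 / (ν + 1 : ℝ)) := by
      rw [norm_smul, e.orthonormal.1 _, mul_one, norm_mul, Complex.norm_real, norm_zpow]
      have hexp : (α ν : ℤ) - ((0 : ℕ) : ℤ) + 1 = ((α ν + 1 : ℕ) : ℤ) := by push_cast; ring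
      rw [hexp, zpow_natCast]
      have hratio : |bb ω (p ν + 0) / bb ω (p ν + α ν)|
          = bb ω (p ν) / bb ω (p ν + α ν) := by
        rw [Nat.add_zero]
        exact abs_of_pos (div_pos (bb_pos hpos _) (bb_pos hpos _))
      rw [Real.norm_eq_abs, hratio]
      have hzb : ‖z‖ ^ (α ν + 1) ≤ τ₂ ^ (α ν + 1) :=
        pow_le_pow_left₀ (norm_nonneg z) hznorm2.le _
      have hr0 : (0 : ℝ) ≤ bb ω (p ν) / bb ω (p ν + α ν) :=
        le_of_lt (div_pos (bb_pos hpos _) (bb_pos hpos _))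
      calc bb ω (p ν) / bb ω (p ν + α ν) * ‖z‖ ^ (α ν + 1)
          ≤ bb ω (p ν) / bb ω (p ν + α ν) * τ₂ ^ (α ν + 1) :=
            mul_le_mul_of_nonneg_left hzb hr0
        _ = (bb ω (p ν) / bb ω (p ν + α ν) * τ₂ ^ (α ν)) * τ₂ := by ring
        _ ≤ ((1 / (ν + 1 : ℝ))) * τ₂ := by
            refine mul_le_mul_of_nonneg_right ?_ (by linarith)
            have := hA ν
            rw [div_mul_eq_mul_div, div_le_iff₀ (bb_pos hpos _)]
            calc bb ω (p ν) * τ₂ ^ α ν = τ₂ ^ α ν * bb ω (p ν) := by ring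
              _ ≤ (1 / (ν + 1 : ℝ)) * bb ω (p ν + α ν) := le_of_lt (hA ν)
        _ = τ₂ * (1 / (ν + 1 : ℝ)) := by ring
    calc ‖_ - _‖ ≤ ‖_‖ + ‖_‖ := norm_sub_le _ _
      _ ≤ τ₂ * (1 / (ν + 1 : ℝ)) + τ₂ * (1 / (ν + 1 : ℝ)) := add_le_add hterm1 hterm2
      _ = 2 * τ₂ * (1 / (ν + 1 : ℝ)) := by ring
      _ < δ := hν
  -- apply property (β) and derive a contradiction
  set ρ : ℝ := (τ₁ + τ₂) / 2 with hρdef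
  have hρ1 : τ₁ < ρ := by rw [hρdef]; linarith
  have hρ2 : ρ < τ₂ := by rw [hρdef]; linarith
  have hρpos : 0 < ρ := lt_trans hτ1 hρ1
  set K : Set ℂ := Metric.sphere 0 ρ with hKdef
  have hKsub : K ⊆ U := by
    intro z hz
    rw [hKdef, mem_sphere_zero_iff_norm] at hz
    rw [hmemU, hz]
    exact ⟨hρ1, hρ2⟩
  have hconc := hβ U hUopen F hanalytic hhyp K hKsub (isCompact_sphere 0 ρ)
  set z₀ : ℂ := (ρ : ℂ) with hz₀def
  have hz₀K : z₀ ∈ K := by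
    rw [hKdef, mem_sphere_zero_iff_norm, hz₀def, Complex.norm_real, Real.norm_eq_abs]
    exact abs_of_pos hρpos
  have htend : Tendsto (fun ν => F ν z₀) atTop (nhds 0) := by
    have := hconc.tendsto_at hz₀K
    simpa using this
  have hlow : ∀ ν, 1 ≤ ‖F ν z₀‖ := by
    intro ν
    have hinj2 : Function.Injective fun i : ℕ => p ν + i := fun a b h => by
      simpa using Nat.add_left_cancel h
    have hvo : Orthonormal ℂ (⇑e ∘ fun i : ℕ => p ν + i) := e.orthonormal.comp _ hinj2
    have hmem : α ν ∈ Finset.range (α ν + γ ν) := Finset.mem_range.mpr (by have := hγ ν; omega)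
    have hin := hvo.inner_right_sum
      (fun i => ((bb ω (p ν + i) / bb ω (p ν + α ν) : ℝ) : ℂ) * z₀ ^ ((α ν : ℤ) - (i : ℤ))) hmem
    have hval : (((bb ω (p ν + α ν) / bb ω (p ν + α ν) : ℝ) : ℂ)
        * z₀ ^ ((α ν : ℤ) - (α ν : ℤ))) = 1 := by
      rw [div_self (bb_pos hpos _).ne', sub_self, zpow_zero, Complex.ofReal_one, one_mul]
    have hin2 : (inner ℂ (e (p ν + α ν)) (F ν z₀) : ℂ)
        = ((bb ω (p ν + α ν) / bb ω (p ν + α ν) : ℝ) : ℂ)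
          * z₀ ^ ((α ν : ℤ) - ((α ν : ℕ) : ℤ)) := hin
    have hin' : (inner ℂ (e (p ν + α ν)) (F ν z₀) : ℂ) = 1 := by rw [hin2, hval]
    calc (1 : ℝ) = ‖(inner ℂ (e (p ν + α ν)) (F ν z₀) : ℂ)‖ := by rw [hin', norm_one]
      _ ≤ ‖e (p ν + α ν)‖ * ‖F ν z₀‖ := norm_inner_le_norm _ _
      _ = ‖F ν z₀‖ := by rw [e.orthonormal.1 _, one_mul]
  have hev : ∀ᶠ ν in atTop, ‖F ν z₀‖ < 1 := by
    have hn : Tendsto (fun ν => ‖F ν z₀‖) atTop (nhds 0) := by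
      simpa using htend.norm
    exact hn.eventually_lt_const one_pos
  obtain ⟨ν, hν⟩ := hev.exists
  linarith [hlow ν]


variable {H : Type*} [NormedAddCommGroup H] [InnerProductSpace ℂ H] [CompleteSpace H]

lemma lowerBound_nonneg (T : H →L[ℂ] H) : 0 ≤ lowerBound T :=
  Real.sInf_nonneg (by rintro x ⟨y, _, rfl⟩; exact norm_nonneg _)

lemma lowerBound_le (T : H →L[ℂ] H) {x : H} (hx : ‖x‖ = 1) : lowerBound T ≤ ‖T x‖ :=
  csInf_le ⟨0, by rintro y ⟨z, _, rfl⟩; exact norm_nonneg _⟩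
    ⟨x, mem_sphere_zero_iff_norm.mpr hx, rfl⟩

lemma exists_unit_lt (T : H →L[ℂ] H) (x₀ : H) (hx₀ : ‖x₀‖ = 1) {b : ℝ}
    (h : lowerBound T < b) : ∃ x : H, ‖x‖ = 1 ∧ ‖T x‖ < b := by
  have h' : sInf ((fun x => ‖T x‖) '' Metric.sphere (0 : H) 1) < b := h
  have hne : ((fun x => ‖T x‖) '' Metric.sphere (0 : H) 1).Nonempty :=
    ⟨‖T x₀‖, ⟨x₀, mem_sphere_zero_iff_norm.mpr hx₀, rfl⟩⟩
  obtain ⟨y, ⟨x, hx, rfl⟩, hy⟩ := exists_lt_of_csInf_lt hne h'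
  exact ⟨x, mem_sphere_zero_iff_norm.mp hx, hy⟩

end BishopAux



variable {H : Type*} [NormedAddCommGroup H] [InnerProductSpace ℂ H] [CompleteSpace H]

set_option maxHeartbeats 1000000 in
open BishopAux in
/-- If a unilateral weighted shift with positive bounded weights possesses Bishop's
property (β), then `r₁(S) = lim m(Sⁿ)^(1/n)` equals the spectral radius `r(S)`. -/
theorem bishopBeta_implies_r₁_eq_r (S : H →L[ℂ] H)
    (e : HilbertBasis ℕ ℂ H) (ω : ℕ → ℝ) (hpos : ∀ n, 0 < ω n)
    (hbd : ∃ M : ℝ, ∀ n, ω n ≤ M)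
    (hS : ∀ n, S (e n) = (ω n : ℂ) • e (n + 1))
    (hβ : HasBishopBeta S) :
    Tendsto (fun n : ℕ => lowerBound (S ^ n) ^ ((n : ℝ)⁻¹)) atTop
      (nhds (spectralRadius ℂ S).toReal) := by
  haveI : Nontrivial H := ⟨⟨e 0, 0, fun h => by simpa [h] using e.orthonormal.1 0⟩⟩
  set r := (spectralRadius ℂ S).toReal with hrdef
  have hfin : spectralRadius ℂ S ≠ ⊤ :=
    (lt_of_le_of_lt (spectrum.spectralRadius_le_nnnorm (𝕜 := ℂ) S) ENNReal.coe_lt_top).ne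
  have hnorm : Tendsto (fun n : ℕ => ‖S ^ n‖ ^ ((n : ℝ)⁻¹)) atTop (nhds r) := by
    have hg := spectrum.pow_nnnorm_pow_one_div_tendsto_nhds_spectralRadius S
    have h2 := (ENNReal.tendsto_toReal hfin).comp hg
    have h3 : (fun n : ℕ => (((‖S ^ n‖₊ : ℝ≥0∞)) ^ (1 / (n : ℝ))).toReal)
        = fun n : ℕ => ‖S ^ n‖ ^ ((n : ℝ)⁻¹) := by
      funext n
      rw [← ENNReal.toReal_rpow, ENNReal.coe_toReal, coe_nnnorm, one_div]
    have h4 : Tendsto (fun n : ℕ => (((‖S ^ n‖₊ : ℝ≥0∞)) ^ (1 / (n : ℝ))).toReal)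
        atTop (nhds r) := h2
    rwa [h3] at h4
  have hm0 : ∀ n : ℕ, 0 ≤ lowerBound (S ^ n) := fun n => lowerBound_nonneg _
  have he1 : ‖e 0‖ = 1 := e.orthonormal.1 0
  have hmle : ∀ n : ℕ, lowerBound (S ^ n) ≤ ‖S ^ n‖ := by
    intro n
    refine (lowerBound_le (S ^ n) he1).trans ?_
    have := (S ^ n).le_opNorm (e 0)
    rwa [he1, mul_one] at this
  rw [tendsto_order]
  constructor
  · -- hard direction : eventually a < m(Sⁿ)^(1/n) for every a < r
    intro a ha
    rcases lt_or_ge a 0 with ha0 | ha0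
    · exact Eventually.of_forall fun n => lt_of_lt_of_le ha0 (Real.rpow_nonneg (hm0 n) _)
    by_contra hev
    rw [not_eventually] at hev
    have hfreq : ∃ᶠ n : ℕ in atTop, lowerBound (S ^ n) ^ ((n : ℝ)⁻¹) ≤ a := by
      simpa [not_lt] using hev
    -- numeric setup
    set δ := (r - a) / 7 with hδdef
    have hδ : 0 < δ := by rw [hδdef]; linarith
    set s := a + δ with hsdef
    set t₁' := a + 2 * δ with ht₁'def
    set t₂' := a + 3 * δ with ht₂'def
    set t₁ := a + 4 * δ with ht₁def
    set t₂ := a + 5 * δ with ht₂def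
    set u := a + 6 * δ with hudef
    have hs0 : 0 < s := by rw [hsdef]; linarith
    have ht₁'0 : 0 < t₁' := by rw [ht₁'def]; linarith
    have ht₂'0 : 0 < t₂' := by rw [ht₂'def]; linarith
    have ht₁0 : 0 < t₁ := by rw [ht₁def]; linarith
    have ht₂0 : 0 < t₂ := by rw [ht₂def]; linarith
    have hu0 : 0 < u := by rw [hudef]; linarith
    have hst₁' : s < t₁' := by rw [hsdef, ht₁'def]; linarith
    have ht₁'t₂' : t₁' < t₂' := by rw [ht₁'def, ht₂'def]; linarith
    have ht₂'t₁ : t₂' < t₁ := by rw [ht₂'def, ht₁def]; linarith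
    have ht₁t₂ : t₁ < t₂ := by rw [ht₁def, ht₂def]; linarith
    have ht₂u : t₂ < u := by rw [ht₂def, hudef]; linarith
    have hur : u < r := by rw [hudef, hδdef]; linarith
    have has : a < s := by rw [hsdef]; linarith
    obtain ⟨ε, hε0, hε1, hD⟩ := dichotomy S e ω hpos hS hβ t₁ t₂ ht₁0 ht₁t₂
    obtain ⟨ε', hε'0, hε'1, hD'⟩ := dichotomy S e ω hpos hS hβ t₁' t₂' ht₁'0 ht₁'t₂'
    -- fall windows of every large length
    have hfall : ∀ N : ℕ, ∃ n, N ≤ n ∧ 1 ≤ n ∧ ∃ k, bb ω (k + n) < s ^ n * bb ω k := by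
      intro N
      obtain ⟨n, hn, hle⟩ := frequently_atTop.mp hfreq (max N 1)
      have hn1 : 1 ≤ n := le_trans (le_max_right _ _) hn
      have hnN : N ≤ n := le_trans (le_max_left _ _) hn
      have h1 : lowerBound (S ^ n) ≤ a ^ n := by
        have h2 : (lowerBound (S ^ n) ^ ((n : ℝ)⁻¹)) ^ n ≤ a ^ n :=
          pow_le_pow_left₀ (Real.rpow_nonneg (hm0 n) _) hle n
        rwa [Real.rpow_inv_natCast_pow (hm0 n) (by omega)] at h2
      have h3 : lowerBound (S ^ n) < s ^ n :=
        lt_of_le_of_lt h1 (pow_lt_pow_left₀ has ha0 (by omega))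
      obtain ⟨x, hx1, hxlt⟩ := exists_unit_lt (S ^ n) (e 0) he1 h3
      refine ⟨n, hnN, hn1, ?_⟩
      by_contra hk
      push_neg at hk
      have := le_apply S e ω hpos hS (c := s ^ n) (le_of_lt (pow_pos hs0 n)) hk x
      rw [hx1, mul_one] at this
      linarith
    -- rise windows of every large length
    have hrise : ∀ᶠ m : ℕ in atTop, ∃ l, u ^ m * bb ω l < bb ω (l + m) := by
      have hev2 : ∀ᶠ m : ℕ in atTop, u < ‖S ^ m‖ ^ ((m : ℝ)⁻¹) :=
        hnorm.eventually_const_lt hur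
      filter_upwards [hev2, eventually_ge_atTop 1] with m hm hm1
      have hum : u ^ m < ‖S ^ m‖ := by
        have h2 : u ^ m < (‖S ^ m‖ ^ ((m : ℝ)⁻¹)) ^ m :=
          pow_lt_pow_left₀ hm hu0.le (by omega)
        rwa [Real.rpow_inv_natCast_pow (norm_nonneg _) (by omega)] at h2
      by_contra hl
      push_neg at hl
      have := ContinuousLinearMap.opNorm_le_bound (S ^ m) (le_of_lt (pow_pos hu0 m))
        (apply_le S e ω hpos hS (le_of_lt (pow_pos hu0 m)) hl)
      linarith
    -- choose a rise window with large rise factor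
    have hgeo : ∀ᶠ m : ℕ in atTop, t₂ ^ m < ε * ε' * u ^ m := by
      have h0 : Tendsto (fun m : ℕ => (t₂ / u) ^ m) atTop (nhds 0) :=
        tendsto_pow_atTop_nhds_zero_of_lt_one (le_of_lt (div_pos ht₂0 hu0))
          (by rw [div_lt_one hu0]; exact ht₂u)
      filter_upwards [h0.eventually_lt_const (show (0 : ℝ) < ε * ε' from mul_pos hε0 hε'0)]
        with m hm
      have hup : 0 < u ^ m := pow_pos hu0 m
      calc t₂ ^ m = (t₂ / u) ^ m * u ^ m := by
            rw [div_pow]; field_simp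
        _ < ε * ε' * u ^ m := mul_lt_mul_of_pos_right hm hup
    obtain ⟨m, ⟨⟨l, hl⟩, hgm⟩, hm1⟩ := ((hrise.and hgeo).and (eventually_ge_atTop 1)).exists
    set J := l + m with hJdef
    -- after the rise, the weight products grow at rate at least t₁
    have hdiam : ∀ γ : ℕ, 1 ≤ γ → ε * (t₁ ^ γ * bb ω J) ≤ bb ω (J + γ) := by
      intro γ hγ1
      rcases hD l m γ hγ1 with h | h
      · exfalso
        have w1 : ε * (u ^ m * bb ω l) < ε * bb ω (l + m) := mul_lt_mul_of_pos_left hl hε0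
        have w2 : ε * (u ^ m * bb ω l) < t₂ ^ m * bb ω l := lt_of_lt_of_le w1 h
        have w2' : (ε * u ^ m) * bb ω l < t₂ ^ m * bb ω l := by rw [mul_assoc]; exact w2
        have w3 : ε * u ^ m < t₂ ^ m :=
          lt_of_mul_lt_mul_right w2' (bb_pos hpos l).le
        have w4 : ε * ε' * u ^ m ≤ ε * u ^ m := by
          have := mul_le_of_le_one_right hε0.le hε'1
          nlinarith [pow_pos hu0 m]
        linarith
      · exact h
    -- late falls starting at or after J
    set C := ∏ i ∈ Finset.range J, min (ω i) 1 with hCdef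
    have hC0 : 0 < C := Finset.prod_pos fun i _ => lt_min (hpos i) one_pos
    have hbκ : ∀ κ, κ ≤ J → bb ω κ * C ≤ bb ω J := by
      intro κ hκ
      have h1 : bb ω J = bb ω κ * ∏ i ∈ Finset.Ico κ J, ω i :=
        (Finset.prod_range_mul_prod_Ico ω hκ).symm
      rw [h1]
      refine mul_le_mul_of_nonneg_left ?_ (bb_pos hpos κ).le
      calc C ≤ ∏ i ∈ Finset.Ico κ J, min (ω i) 1 := by
            rw [hCdef, ← Finset.prod_range_mul_prod_Ico (fun i => min (ω i) 1) hκ]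
            refine mul_le_of_le_one_left ?_ ?_
            · exact Finset.prod_nonneg fun i _ => le_min (hpos i).le zero_le_one
            · exact Finset.prod_le_one (fun i _ => le_min (hpos i).le zero_le_one)
                (fun i _ => min_le_right _ _)
        _ ≤ ∏ i ∈ Finset.Ico κ J, ω i :=
            Finset.prod_le_prod (fun i _ => le_min (hpos i).le zero_le_one)
              (fun i _ => min_le_left _ _)
    set D₁ := (max 1 s) ^ J / C with hD₁def
    have hD₁0 : 0 < D₁ := div_pos (pow_pos (lt_of_lt_of_le one_pos (le_max_left 1 s)) J) hC0
    have hD₁1 : 1 ≤ D₁ := by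
      rw [hD₁def, le_div_iff₀ hC0, one_mul]
      calc C ≤ 1 := Finset.prod_le_one (fun i _ => le_min (hpos i).le zero_le_one)
            (fun i _ => min_le_right _ _)
        _ ≤ (max 1 s) ^ J := one_le_pow₀ (le_max_left 1 s)
    have hlate : ∀ N : ℕ, ∃ n, N ≤ n ∧ 1 ≤ n ∧
        ∃ d, bb ω (J + d + n) < D₁ * s ^ n * bb ω (J + d) := by
      intro N
      obtain ⟨n', hn'1, hn'2, κ, hκ⟩ := hfall (N + J + 1)
      rcases le_or_gt J κ with hJκ | hκJ
      · refine ⟨n', by omega, by omega, κ - J, ?_⟩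
        have hidx : J + (κ - J) = κ := by omega
        rw [hidx]
        calc bb ω (κ + n') < s ^ n' * bb ω κ := hκ
          _ = 1 * (s ^ n' * bb ω κ) := (one_mul _).symm
          _ ≤ D₁ * (s ^ n' * bb ω κ) := by
              refine mul_le_mul_of_nonneg_right hD₁1 ?_
              exact mul_nonneg (le_of_lt (pow_pos hs0 n')) (bb_pos hpos κ).le
          _ = D₁ * s ^ n' * bb ω κ := (mul_assoc _ _ _).symm
      · refine ⟨κ + n' - J, by omega, by omega, 0, ?_⟩
        have hidx1 : J + 0 + (κ + n' - J) = κ + n' := by omega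
        have hidx2 : J + 0 = J := by omega
        rw [hidx1, hidx2]
        have h2 : bb ω κ ≤ bb ω J / C := by
          rw [le_div_iff₀ hC0]; exact hbκ κ hκJ.le
        have h3 : s ^ n' = s ^ (κ + n' - J) * s ^ (J - κ) := by
          rw [← pow_add]; congr 1; omega
        have h4 : s ^ (J - κ) ≤ (max 1 s) ^ J := by
          calc s ^ (J - κ) ≤ (max 1 s) ^ (J - κ) :=
                pow_le_pow_left₀ hs0.le (le_max_right 1 s) _
            _ ≤ (max 1 s) ^ J :=
                pow_le_pow_right₀ (le_max_left 1 s) (by omega)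
        calc bb ω (κ + n') < s ^ n' * bb ω κ := hκ
          _ ≤ s ^ n' * (bb ω J / C) :=
              mul_le_mul_of_nonneg_left h2 (le_of_lt (pow_pos hs0 n'))
          _ = s ^ (κ + n' - J) * s ^ (J - κ) / C * bb ω J := by rw [h3]; ring
          _ ≤ s ^ (κ + n' - J) * (max 1 s) ^ J / C * bb ω J := by
              have hb := (bb_pos hpos J).le
              refine mul_le_mul_of_nonneg_right ?_ hb
              rw [div_le_div_iff_of_pos_right hC0]
              exact mul_le_mul_of_nonneg_left h4 (le_of_lt (pow_pos hs0 _))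
          _ = D₁ * s ^ (κ + n' - J) * bb ω J := by rw [hD₁def]; ring
    -- choose a late fall beating the second dichotomy constant
    have hNev : ∀ᶠ n : ℕ in atTop, D₁ * s ^ n < ε' * t₁' ^ n := by
      have h0 : Tendsto (fun n : ℕ => (s / t₁') ^ n) atTop (nhds 0) :=
        tendsto_pow_atTop_nhds_zero_of_lt_one (le_of_lt (div_pos hs0 ht₁'0))
          (by rw [div_lt_one ht₁'0]; exact hst₁')
      filter_upwards [h0.eventually_lt_const
        (show (0 : ℝ) < ε' / D₁ from div_pos hε'0 hD₁0)] with n hn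
      rw [div_pow, div_lt_div_iff₀ (pow_pos ht₁'0 n) hD₁0] at hn
      linarith [hn]
    obtain ⟨N, hN⟩ := eventually_atTop.mp hNev
    obtain ⟨n, hnN, hn1, d, hfd⟩ := hlate N
    have hfd2 : bb ω (J + d + n) < ε' * t₁' ^ n * bb ω (J + d) :=
      lt_trans hfd (mul_lt_mul_of_pos_right (hN n hnN) (bb_pos hpos _))
    have hidx : l + (m + d) = J + d := by omega
    rcases hD' l (m + d) n hn1 with h | h
    · -- first horn is impossible: the products have risen too much since l
      rw [hidx] at h
      have hbJd : ε * (t₁ ^ d * bb ω J) ≤ bb ω (J + d) := by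
        rcases Nat.eq_zero_or_pos d with hd0 | hd1
        · subst hd0
          simp only [pow_zero, one_mul, Nat.add_zero]
          nlinarith [bb_pos hpos J]
        · exact hdiam d hd1
      have c1 : t₂' ^ (m + d) ≤ ε * ε' * u ^ m * t₁ ^ d := by
        have e1 : t₂' ^ m ≤ t₂ ^ m := pow_le_pow_left₀ ht₂'0.le (by linarith) m
        have e2 : t₂' ^ d ≤ t₁ ^ d := pow_le_pow_left₀ ht₂'0.le (by linarith) d
        calc t₂' ^ (m + d) = t₂' ^ m * t₂' ^ d := pow_add _ _ _
          _ ≤ t₂ ^ m * t₁ ^ d :=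
              mul_le_mul e1 e2 (le_of_lt (pow_pos ht₂'0 d)) (le_of_lt (pow_pos ht₂0 m))
          _ ≤ (ε * ε' * u ^ m) * t₁ ^ d :=
              mul_le_mul_of_nonneg_right hgm.le (le_of_lt (pow_pos ht₁0 d))
      have hl' : u ^ m * bb ω l < bb ω J := hl
      have s1 : ε * (t₁ ^ d * (u ^ m * bb ω l)) < ε * (t₁ ^ d * bb ω J) :=
        mul_lt_mul_of_pos_left (mul_lt_mul_of_pos_left hl' (pow_pos ht₁0 d)) hε0
      have s2 : ε * (t₁ ^ d * (u ^ m * bb ω l)) < bb ω (J + d) := lt_of_lt_of_le s1 hbJd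
      have s3 : ε' * (ε * (t₁ ^ d * (u ^ m * bb ω l))) < ε' * bb ω (J + d) :=
        mul_lt_mul_of_pos_left s2 hε'0
      have s4 : t₂' ^ (m + d) * bb ω l ≤ ε' * (ε * (t₁ ^ d * (u ^ m * bb ω l))) := by
        calc t₂' ^ (m + d) * bb ω l ≤ (ε * ε' * u ^ m * t₁ ^ d) * bb ω l :=
              mul_le_mul_of_nonneg_right c1 (bb_pos hpos l).le
          _ = ε' * (ε * (t₁ ^ d * (u ^ m * bb ω l))) := by ring
      linarith
    · -- second horn is impossible: the fall is too steep
      rw [hidx] at h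
      rw [← mul_assoc] at h
      linarith
  · -- easy direction : eventually m(Sⁿ)^(1/n) < a for every a > r
    intro a ha
    have hev2 : ∀ᶠ n : ℕ in atTop, ‖S ^ n‖ ^ ((n : ℝ)⁻¹) < a := hnorm.eventually_lt_const ha
    filter_upwards [hev2, eventually_ge_atTop 1] with n hn hn1
    calc lowerBound (S ^ n) ^ ((n : ℝ)⁻¹) ≤ ‖S ^ n‖ ^ ((n : ℝ)⁻¹) :=
          Real.rpow_le_rpow (hm0 n) (hmle n) (by positivity)
      _ < a := hn
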